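/- The partial derivative with respect to t_n of Σ_{i=1}^n (t_i − 1) H̃_i equals tr(A_n A_{n+1})/t_n². -/

import Mathlib

open Finset

noncomputable section

/-- Extend `t = (t₁, …, tₙ) : Fin n → ℂ` by the fixed points `t_{n+1} = 0` and
`t_{n+2} = 1` (0-based: indices `n` and `n+1` of `Fin (n+2)`). -/
def ext (n : ℕ) (t : Fin n → ℂ) (j : Fin (n + 2)) : ℂ :=
  if h : (j : ℕ) < n then t ⟨j, h⟩ else if (j : ℕ) = n then 0 else 1

/-- Inclusion of indices `1, …, n` into `1, …, n+2` (0-based). -/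
def inc (n : ℕ) : Fin n → Fin (n + 2) := Fin.castLE (by omega)

/-- The partial derivative `∂f/∂t_i` of a scalar function on `ℂⁿ`. -/
def pderiv (n : ℕ) (i : Fin n) (f : (Fin n → ℂ) → ℂ) (t : Fin n → ℂ) : ℂ :=
  fderiv ℂ f t (Pi.single i 1)

/-- `ρ = −(θ₁ + ⋯ + θ_{n+3})/2`. -/
def rho (n : ℕ) (θ : Fin (n + 3) → ℂ) : ℂ := -(∑ j, θ j) / 2

/-- The constants `C_{ij} = −θ_iθ_j/2 + (θ_i² + θ_j²)/(2(n+1))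
− (Σ_k θ_k²)/(2(n+1)(n+2))`. -/
def Cc (n : ℕ) (θ : Fin (n + 3) → ℂ) (i j : Fin (n + 2)) : ℂ :=
  -(θ (Fin.castSucc i) * θ (Fin.castSucc j)) / 2
    + (θ (Fin.castSucc i) ^ 2 + θ (Fin.castSucc j) ^ 2) / (2 * ((n : ℂ) + 1))
    - (∑ k, θ k ^ 2) / (2 * ((n : ℂ) + 1) * ((n : ℂ) + 2))

/-- `H̃_i = Σ_{1 ≤ j ≤ n+2, j ≠ i} tr(A_i A_j)/(t_i − t_j)`. -/
def Htil (n : ℕ) (A : Fin (n + 2) → (Fin n → ℂ) → Matrix (Fin 2) (Fin 2) ℂ)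
    (i : Fin n) (t : Fin n → ℂ) : ℂ :=
  ∑ j ∈ Finset.univ.filter (fun j => j ≠ inc n i),
    (A (inc n i) t * A j t).trace / (t i - ext n t j)


lemma ext_inc (n : ℕ) (s : Fin n → ℂ) (i : Fin n) : ext n s (inc n i) = s i := by
  simp only [_root_.ext, inc, Fin.castLE]
  simp [i.isLt]

lemma ext_n (n : ℕ) (s : Fin n → ℂ) (h : n < n + 2) : ext n s ⟨n, h⟩ = 0 := by
  simp [_root_.ext]

lemma ext_last (n : ℕ) (s : Fin n → ℂ) (h : n + 1 < n + 2) : ext n s ⟨n + 1, h⟩ = 1 := by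
  simp [_root_.ext]

def Ha (n : ℕ) (A : Fin (n + 2) → (Fin n → ℂ) → Matrix (Fin 2) (Fin 2) ℂ)
    (s : Fin n → ℂ) : ℂ :=
  ∑ k ∈ Finset.univ.filter (fun k => k ≠ (⟨n, Nat.lt_succ_of_lt (Nat.lt_succ_self n)⟩ : Fin (n + 2))),
    (A (⟨n, Nat.lt_succ_of_lt (Nat.lt_succ_self n)⟩ : Fin (n + 2)) s * A k s).trace / (0 - ext n s k)

lemma trace2_sq (X : Matrix (Fin 2) (Fin 2) ℂ) :
    (X * X).trace = X.trace ^ 2 - 2 * X.det := by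
  simp [Matrix.trace, Matrix.mul_apply, Matrix.det_fin_two, Fin.sum_univ_two, Matrix.diag]
  ring

lemma sum_swap_ne {α : Type*} [Fintype α] [DecidableEq α] (h : α → α → ℂ) :
    ∑ j, ∑ k ∈ Finset.univ.filter (fun k => k ≠ j), h j k
      = ∑ j, ∑ k ∈ Finset.univ.filter (fun k => k ≠ j), h k j := by
  simp only [Finset.sum_filter]
  rw [Finset.sum_comm]
  refine Finset.sum_congr rfl fun j _ => Finset.sum_congr rfl fun k _ => ?_
  by_cases hk : k = j
  · simp [hk]
  · simp [hk, Ne.symm hk]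

/-- The weighted sum over all `n+2` points. -/
def Tfun (n : ℕ) (A : Fin (n + 2) → (Fin n → ℂ) → Matrix (Fin 2) (Fin 2) ℂ)
    (s : Fin n → ℂ) (j : Fin (n + 2)) : ℂ :=
  ∑ k ∈ Finset.univ.filter (fun k => k ≠ j),
    (ext n s j - 1) * (A j s * A k s).trace / (ext n s j - ext n s k)

lemma Tsum_eval (n : ℕ) (θ : Fin (n + 3) → ℂ)
    (A : Fin (n + 2) → (Fin n → ℂ) → Matrix (Fin 2) (Fin 2) ℂ) (s : Fin n → ℂ)
    (hd : ∀ j k : Fin (n + 2), j ≠ k → ext n s j ≠ ext n s k)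
    (hdet : ∀ j, (A j s).det = 0)
    (htr : ∀ j : Fin (n + 2), (A j s).trace = θ (Fin.castSucc j))
    (hsum : ∑ j, A j s =
      -Matrix.diagonal ![rho n θ, rho n θ + θ (Fin.last (n + 2))]) :
    ∑ j, Tfun n A s j =
      (((-Matrix.diagonal ![rho n θ, rho n θ + θ (Fin.last (n + 2))]) *
        (-Matrix.diagonal ![rho n θ, rho n θ + θ (Fin.last (n + 2))]) :
          Matrix (Fin 2) (Fin 2) ℂ).trace
        - ∑ j : Fin (n + 2), θ (Fin.castSucc j) ^ 2) / 2 := by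
  have hTsum : (2 : ℂ) * ∑ j, Tfun n A s j
      = ∑ j, ∑ k ∈ Finset.univ.filter (fun k => k ≠ j), (A j s * A k s).trace := by
    rw [two_mul]
    nth_rewrite 2 [show ∑ j, Tfun n A s j = _ from
      sum_swap_ne (fun j k => (ext n s j - 1) * (A j s * A k s).trace / (ext n s j - ext n s k))]
    rw [← Finset.sum_add_distrib]
    refine Finset.sum_congr rfl fun j _ => ?_
    rw [Tfun, ← Finset.sum_add_distrib]
    refine Finset.sum_congr rfl fun k hk => ?_
    have hkj : k ≠ j := by simpa using hk
    have h1 : ext n s j - ext n s k ≠ 0 := sub_ne_zero.mpr (hd j k (Ne.symm hkj))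
    have h2 : ext n s k - ext n s j ≠ 0 := sub_ne_zero.mpr (hd k j hkj)
    have hf : (A k s * A j s).trace = (A j s * A k s).trace := Matrix.trace_mul_comm _ _
    rw [hf]
    field_simp
    ring
  have hfull : ∑ j, ∑ k ∈ Finset.univ.filter (fun k => k ≠ j), (A j s * A k s).trace
      = ((-Matrix.diagonal ![rho n θ, rho n θ + θ (Fin.last (n + 2))]) *
          (-Matrix.diagonal ![rho n θ, rho n θ + θ (Fin.last (n + 2))]) :
            Matrix (Fin 2) (Fin 2) ℂ).trace
        - (∑ j : Fin (n + 2), θ (Fin.castSucc j) ^ 2) := by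
    have h1 : ∀ j : Fin (n + 2),
        ∑ k ∈ Finset.univ.filter (fun k => k ≠ j), (A j s * A k s).trace
          = (∑ k, (A j s * A k s).trace) - (A j s * A j s).trace := by
      intro j
      have hfe : (Finset.univ.filter (fun k => k ≠ j) : Finset (Fin (n + 2)))
          = Finset.univ.erase j := Finset.filter_ne' Finset.univ j
      rw [hfe, Finset.sum_erase_eq_sub (Finset.mem_univ j)]
    rw [Finset.sum_congr rfl fun j _ => h1 j, Finset.sum_sub_distrib]
    have h2 : ∑ j : Fin (n + 2), ∑ k, (A j s * A k s).trace
        = ((-Matrix.diagonal ![rho n θ, rho n θ + θ (Fin.last (n + 2))]) *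
          (-Matrix.diagonal ![rho n θ, rho n θ + θ (Fin.last (n + 2))]) :
            Matrix (Fin 2) (Fin 2) ℂ).trace := by
      rw [← hsum, Finset.sum_mul_sum, Matrix.trace_sum]
      exact Finset.sum_congr rfl fun j _ => (Matrix.trace_sum _ _).symm
    have h3 : ∀ j : Fin (n + 2), (A j s * A j s).trace = θ (Fin.castSucc j) ^ 2 := by
      intro j
      rw [trace2_sq, htr, hdet]
      ring
    rw [h2, Finset.sum_congr rfl fun j _ => h3 j]
  linear_combination (hTsum.trans hfull) / 2

def Lam (n : ℕ) (θ : Fin (n + 3) → ℂ) : Matrix (Fin 2) (Fin 2) ℂ :=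
  -Matrix.diagonal ![rho n θ, rho n θ + θ (Fin.last (n + 2))]

def Cconst (n : ℕ) (θ : Fin (n + 3) → ℂ) : ℂ :=
  ((Lam n θ * Lam n θ).trace - (∑ j : Fin (n + 2), θ (Fin.castSucc j) ^ 2)) / 2

lemma piece1 (n : ℕ) (θ : Fin (n + 3) → ℂ)
    (A : Fin (n + 2) → (Fin n → ℂ) → Matrix (Fin 2) (Fin 2) ℂ) (s : Fin n → ℂ)
    (hd : ∀ j k : Fin (n + 2), j ≠ k → ext n s j ≠ ext n s k)
    (hdet : ∀ j, (A j s).det = 0)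
    (htr : ∀ j : Fin (n + 2), (A j s).trace = θ (Fin.castSucc j))
    (hsum : ∑ j, A j s =
      -Matrix.diagonal ![rho n θ, rho n θ + θ (Fin.last (n + 2))]) :
    ∑ i, (s i - 1) * Htil n A i s = Ha n A s + Cconst n θ := by
  have hE := Tsum_eval n θ A s hd hdet htr hsum
  have hTa : Tfun n A s ⟨n, by omega⟩ = -Ha n A s := by
    have h1 : Tfun n A s ⟨n, by omega⟩
        = ∑ k ∈ Finset.univ.filter (fun k => k ≠ (⟨n, by omega⟩ : Fin (n + 2))),
            -((A (⟨n, by omega⟩ : Fin (n + 2)) s * A k s).trace / (0 - ext n s k)) := by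
      refine Finset.sum_congr rfl fun k _ => ?_
      rw [ext_n]
      ring
    rw [h1, Ha, Finset.sum_neg_distrib]
  have hTb : Tfun n A s ⟨n + 1, by omega⟩ = 0 := by
    refine Finset.sum_eq_zero fun k _ => ?_
    rw [ext_last]
    ring
  have hTi : ∀ i : Fin n, Tfun n A s (inc n i) = (s i - 1) * Htil n A i s := by
    intro i
    rw [Htil, Finset.mul_sum]
    refine Finset.sum_congr rfl fun k _ => ?_
    rw [ext_inc]
    ring
  have hsplit : ∑ j : Fin (n + 2), Tfun n A s j
      = (∑ i : Fin n, Tfun n A s (inc n i)) + Tfun n A s ⟨n, by omega⟩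
          + Tfun n A s ⟨n + 1, by omega⟩ := by
    rw [Fin.sum_univ_castSucc (f := fun j : Fin (n + 2) => Tfun n A s j),
      Fin.sum_univ_castSucc (f := fun j : Fin (n + 1) => Tfun n A s j.castSucc)]
    have e1 : ∀ i : Fin n, (i.castSucc).castSucc = inc n i := by
      intro i; rfl
    have e2 : ((Fin.last n).castSucc : Fin (n + 2)) = ⟨n, by omega⟩ := rfl
    have e3 : (Fin.last (n + 1) : Fin (n + 2)) = ⟨n + 1, by omega⟩ := rfl
    rw [e2, e3]
    rfl
  have hgoal : ∑ i : Fin n, Tfun n A s (inc n i) = ∑ i, (s i - 1) * Htil n A i s :=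
    Finset.sum_congr rfl fun i _ => hTi i
  have : Cconst n θ = ∑ j : Fin (n + 2), Tfun n A s j := by
    rw [hE, Cconst, Lam]
  rw [← hgoal]
  rw [hsplit, hTa, hTb] at this
  linear_combination -this

-- trace expansion
lemma trace2_expand (X Y : Matrix (Fin 2) (Fin 2) ℂ) :
    (X * Y).trace = ∑ p : Fin 2, ∑ q : Fin 2, X p q * Y q p := by
  simp [Matrix.trace, Matrix.mul_apply, Fin.sum_univ_two, Matrix.diag]



lemma trace2_comm_right (X Y : Matrix (Fin 2) (Fin 2) ℂ) :
    ((X * Y - Y * X) * Y).trace = 0 := by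
  simp [Matrix.trace, Matrix.mul_apply, Fin.sum_univ_two, Matrix.diag, Matrix.sub_apply]
  ring

lemma trace2_left_comm (X Y : Matrix (Fin 2) (Fin 2) ℂ) :
    (X * (Y * X - X * Y)).trace = 0 := by
  simp [Matrix.trace, Matrix.mul_apply, Fin.sum_univ_two, Matrix.diag, Matrix.sub_apply]
  ring

lemma trace2_rot (X Y Z : Matrix (Fin 2) (Fin 2) ℂ) :
    ((Y * X - X * Y) * Z).trace = -(X * (Y * Z - Z * Y)).trace := by
  simp [Matrix.trace, Matrix.mul_apply, Fin.sum_univ_two, Matrix.diag, Matrix.sub_apply]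
  ring

-- swap of a double sum over distinct indices


-- quotient rule in pderiv form
lemma pderiv_div' {n : ℕ} (i : Fin n) (u v : (Fin n → ℂ) → ℂ) (t : Fin n → ℂ)
    (hu : DifferentiableAt ℂ u t) (hv : DifferentiableAt ℂ v t) (h0 : v t ≠ 0) :
    fderiv ℂ (fun s => u s / v s) t (Pi.single i 1)
      = (fderiv ℂ u t (Pi.single i 1) * v t - u t * fderiv ℂ v t (Pi.single i 1)) / (v t) ^ 2 := by
  have h1 : HasFDerivAt (fun s => (v s)⁻¹)
      ((ContinuousLinearMap.smulRight (1 : ℂ →L[ℂ] ℂ) (-(v t ^ 2)⁻¹)).comp (fderiv ℂ v t)) t :=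
    (hasDerivAt_inv h0).hasFDerivAt.comp t hv.hasFDerivAt
  have h2 := hu.hasFDerivAt.fun_mul h1
  have h3 : (fun s => u s / v s) = fun s => u s * (v s)⁻¹ := by
    funext s; rw [div_eq_mul_inv]
  rw [h3, h2.fderiv]
  simp only [ContinuousLinearMap.add_apply, ContinuousLinearMap.smul_apply,
    ContinuousLinearMap.comp_apply, ContinuousLinearMap.smulRight_apply,
    ContinuousLinearMap.one_apply, smul_eq_mul]
  field_simp
  ring

lemma diffAt_coord (n : ℕ) (i : Fin n) (t : Fin n → ℂ) :
    DifferentiableAt ℂ (fun s : Fin n → ℂ => s i) t :=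
  (ContinuousLinearMap.proj i : (Fin n → ℂ) →L[ℂ] ℂ).differentiableAt

lemma fderiv_coord (n : ℕ) (ν i : Fin n) (t : Fin n → ℂ) :
    fderiv ℂ (fun s : Fin n → ℂ => s i) t (Pi.single ν 1) = if i = ν then 1 else 0 := by
  have h : (fun s : Fin n → ℂ => s i)
      = (ContinuousLinearMap.proj i : (Fin n → ℂ) →L[ℂ] ℂ) := rfl
  rw [h, ContinuousLinearMap.fderiv, ContinuousLinearMap.proj_apply, Pi.single_apply]

lemma trace2_comm_fst (X Y : Matrix (Fin 2) (Fin 2) ℂ) :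
    ((X * Y - Y * X) * X).trace = 0 := by
  simp [Matrix.trace, Matrix.mul_apply, Fin.sum_univ_two, Matrix.diag, Matrix.sub_apply]
  ring

lemma trace2_sub_swap (X M N : Matrix (Fin 2) (Fin 2) ℂ) :
    (X * (M - N)).trace = -(X * (N - M)).trace := by
  simp [Matrix.trace, Matrix.mul_apply, Fin.sum_univ_two, Matrix.diag, Matrix.sub_apply]
  ring

lemma sum_entries_to_trace (M X Y N : Matrix (Fin 2) (Fin 2) ℂ) :
    ∑ p : Fin 2, ∑ q : Fin 2, (M p q * Y q p + X p q * N q p)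
      = (M * Y).trace + (X * N).trace := by
  simp [Matrix.trace, Matrix.mul_apply, Fin.sum_univ_two, Matrix.diag]
  ring

lemma pderiv_trace_mul (n : ℕ) (ν : Fin n) (A B : (Fin n → ℂ) → Matrix (Fin 2) (Fin 2) ℂ)
    (t : Fin n → ℂ)
    (hA : ∀ k l, DifferentiableAt ℂ (fun s => A s k l) t)
    (hB : ∀ k l, DifferentiableAt ℂ (fun s => B s k l) t) :
    fderiv ℂ (fun s => (A s * B s).trace) t (Pi.single ν 1)
      = ∑ p : Fin 2, ∑ q : Fin 2,
          (fderiv ℂ (fun s => A s p q) t (Pi.single ν 1) * B t q p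
            + A t p q * fderiv ℂ (fun s => B s q p) t (Pi.single ν 1)) := by
  have h : (fun s => (A s * B s).trace)
      = fun s => ∑ p : Fin 2, ∑ q : Fin 2, A s p q * B s q p :=
    funext fun s => trace2_expand (A s) (B s)
  rw [h]
  rw [fderiv_fun_sum (fun p _ => DifferentiableAt.fun_sum fun q _ => (hA p q).fun_mul (hB q p))]
  rw [ContinuousLinearMap.sum_apply]
  refine Finset.sum_congr rfl fun p _ => ?_
  rw [fderiv_fun_sum (fun q _ => (hA p q).fun_mul (hB q p)), ContinuousLinearMap.sum_apply]
  refine Finset.sum_congr rfl fun q _ => ?_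
  rw [fderiv_fun_mul (hA p q) (hB q p)]
  simp only [ContinuousLinearMap.add_apply, ContinuousLinearMap.smul_apply, smul_eq_mul]
  ring

lemma diffAt_div {n : ℕ} {u v : (Fin n → ℂ) → ℂ} {t : Fin n → ℂ}
    (hu : DifferentiableAt ℂ u t) (hv : DifferentiableAt ℂ v t) (h0 : v t ≠ 0) :
    DifferentiableAt ℂ (fun s => u s / v s) t := by
  have h : (fun s => u s / v s) = fun s => u s * (v s)⁻¹ :=
    funext fun s => div_eq_mul_inv _ _
  rw [h]; exact hu.mul (hv.inv h0)

lemma piece2 (n : ℕ) (U : Set (Fin n → ℂ)) (hU : IsOpen U)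
    (A : Fin (n + 2) → (Fin n → ℂ) → Matrix (Fin 2) (Fin 2) ℂ)
    (t : Fin n → ℂ) (ht : t ∈ U) (ν : Fin n) (a : Fin (n + 2)) (ha : (a : ℕ) = n)
    (hHol : ∀ (j : Fin (n + 2)) (k l : Fin 2), DifferentiableOn ℂ (fun s => A j s k l) U)
    (hdist : ∀ j k : Fin (n + 2), j ≠ k → ext n t j ≠ ext n t k)
    (hSch1 : ∀ j : Fin (n + 2), j ≠ inc n ν → ∀ k l : Fin 2,
        pderiv n ν (fun s => A j s k l) t
          = ((t ν - ext n t j)⁻¹ •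
              (A (inc n ν) t * A j t - A j t * A (inc n ν) t)) k l)
    (hSch2 : ∀ k l : Fin 2,
        pderiv n ν (fun s => A (inc n ν) s k l) t
          = ∑ j ∈ Finset.univ.filter (fun j => j ≠ inc n ν),
              ((t ν - ext n t j)⁻¹ •
                (A j t * A (inc n ν) t - A (inc n ν) t * A j t)) k l) :
    pderiv n ν (Ha n A) t
      = (A (inc n ν) t * A a t).trace / (t ν) ^ 2 := by
  classical
  have hνn : (ν : ℕ) < n := ν.isLt
  have hcv : ((inc n ν : Fin (n + 2)) : ℕ) = (ν : ℕ) := rfl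
  set c : Fin (n + 2) := inc n ν with hc
  have hext_a : ∀ s : Fin n → ℂ, ext n s a = 0 := by
    intro s; simp [_root_.ext, ha]
  have hext_c : ext n t c = t ν := ext_inc n t ν
  have hac : a ≠ c := by
    intro h
    have := congrArg Fin.val h
    rw [ha, hcv] at this
    omega
  have hca : c ≠ a := hac.symm
  have hτ : t ν ≠ 0 := by
    have := hdist c a hca
    rwa [hext_c, hext_a] at this
  have hx0 : ∀ k : Fin (n + 2), k ≠ a → ext n t k ≠ 0 := by
    intro k hk
    have := hdist k a hk
    rwa [hext_a] at this
  have hxτ : ∀ k : Fin (n + 2), k ≠ c → t ν - ext n t k ≠ 0 := by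
    intro k hk
    refine sub_ne_zero.mpr ?_
    have := hdist c k (Ne.symm hk)
    rwa [hext_c] at this
  have hA : ∀ (j : Fin (n + 2)) (k l : Fin 2), DifferentiableAt ℂ (fun s => A j s k l) t :=
    fun j k l => (hHol j k l).differentiableAt (hU.mem_nhds ht)
  have hN : ∀ j k : Fin (n + 2), DifferentiableAt ℂ (fun s => (A j s * A k s).trace) t := by
    intro j k
    have h : (fun s => (A j s * A k s).trace)
        = fun s => ∑ p : Fin 2, ∑ q : Fin 2, A j s p q * A k s q p :=
      funext fun s => trace2_expand _ _
    rw [h]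
    exact DifferentiableAt.fun_sum fun p _ => DifferentiableAt.fun_sum fun q _ => (hA j p q).fun_mul (hA k q p)
  have hExt : ∀ k : Fin (n + 2), DifferentiableAt ℂ (fun s => ext n s k) t := by
    intro k
    by_cases h : (k : ℕ) < n
    · have he : (fun s : Fin n → ℂ => ext n s k) = fun s => s ⟨k, h⟩ :=
        funext fun s => by simp [_root_.ext, h]
      rw [he]; exact diffAt_coord n ⟨k, h⟩ t
    · have he : (fun s : Fin n → ℂ => ext n s k)
          = fun _ => (if (k : ℕ) = n then (0 : ℂ) else 1) :=
        funext fun s => by simp [_root_.ext, h]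
      rw [he]; exact differentiableAt_const _
  have hD : ∀ k : Fin (n + 2), DifferentiableAt ℂ (fun s => (0 : ℂ) - ext n s k) t :=
    fun k => (differentiableAt_const 0).sub (hExt k)
  have hpD : ∀ k : Fin (n + 2),
      fderiv ℂ (fun s => (0 : ℂ) - ext n s k) t (Pi.single ν 1)
        = if k = c then -1 else 0 := by
    intro k
    rw [fderiv_const_sub, ContinuousLinearMap.neg_apply]
    by_cases h : (k : ℕ) < n
    · have he : (fun s : Fin n → ℂ => ext n s k) = fun s => s ⟨k, h⟩ :=
        funext fun s => by simp [_root_.ext, h]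
      rw [he, fderiv_coord]
      by_cases hkn : (k : ℕ) = (ν : ℕ)
      · have h1 : (⟨(k : ℕ), h⟩ : Fin n) = ν := Fin.ext hkn
        have h2 : k = c := Fin.ext (by rw [hcv]; exact hkn)
        rw [if_pos h1, if_pos h2]
      · have h1 : (⟨(k : ℕ), h⟩ : Fin n) ≠ ν := fun hh => hkn (congrArg Fin.val hh)
        have h2 : k ≠ c := fun hh => hkn (by rw [← hcv]; exact congrArg Fin.val hh)
        simp [h1, h2]
    · have he : (fun s : Fin n → ℂ => ext n s k)
          = fun _ => (if (k : ℕ) = n then (0 : ℂ) else 1) :=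
        funext fun s => by simp [_root_.ext, h]
      have h2 : k ≠ c := fun hh => h (by rw [hh, hcv]; exact hνn)
      rw [he, fderiv_fun_const]
      simp [h2]
  have hpN : ∀ k : Fin (n + 2), k ≠ c →
      fderiv ℂ (fun s => (A a s * A k s).trace) t (Pi.single ν 1)
        = (t ν)⁻¹ * ((A c t * A a t - A a t * A c t) * A k t).trace
          + (t ν - ext n t k)⁻¹ * (A a t * (A c t * A k t - A k t * A c t)).trace := by
    intro k hkc
    rw [pderiv_trace_mul n ν (A a) (A k) t (hA a) (hA k)]
    have h1 : ∀ p q : Fin 2, fderiv ℂ (fun s => A a s p q) t (Pi.single ν 1)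
        = ((t ν - ext n t a)⁻¹ • (A c t * A a t - A a t * A c t)) p q :=
      fun p q => hSch1 a hac p q
    have h2 : ∀ q p : Fin 2, fderiv ℂ (fun s => A k s q p) t (Pi.single ν 1)
        = ((t ν - ext n t k)⁻¹ • (A c t * A k t - A k t * A c t)) q p :=
      fun q p => hSch1 k hkc q p
    have h3 : ∑ p : Fin 2, ∑ q : Fin 2,
        (fderiv ℂ (fun s => A a s p q) t (Pi.single ν 1) * A k t q p
          + A a t p q * fderiv ℂ (fun s => A k s q p) t (Pi.single ν 1))
        = ∑ p : Fin 2, ∑ q : Fin 2,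
          (((t ν - ext n t a)⁻¹ • (A c t * A a t - A a t * A c t)) p q * A k t q p
            + A a t p q * ((t ν - ext n t k)⁻¹ • (A c t * A k t - A k t * A c t)) q p) :=
      Finset.sum_congr rfl fun p _ => Finset.sum_congr rfl fun q _ => by
        rw [h1 p q, h2 q p]
    rw [h3, sum_entries_to_trace, Matrix.smul_mul, Matrix.trace_smul, Matrix.mul_smul,
      Matrix.trace_smul, smul_eq_mul, smul_eq_mul, hext_a, sub_zero]
  have hpNc :
      fderiv ℂ (fun s => (A a s * A c s).trace) t (Pi.single ν 1)
        = -∑ j ∈ Finset.univ.filter (fun j => j ≠ c),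
            (t ν - ext n t j)⁻¹ * (A a t * (A c t * A j t - A j t * A c t)).trace := by
    rw [pderiv_trace_mul n ν (A a) (A c) t (hA a) (hA c)]
    have h1 : ∀ p q : Fin 2, fderiv ℂ (fun s => A a s p q) t (Pi.single ν 1)
        = ((t ν - ext n t a)⁻¹ • (A c t * A a t - A a t * A c t)) p q :=
      fun p q => hSch1 a hac p q
    have h2 : ∀ q p : Fin 2, fderiv ℂ (fun s => A c s q p) t (Pi.single ν 1)
        = ∑ j ∈ Finset.univ.filter (fun j => j ≠ c),
            ((t ν - ext n t j)⁻¹ • (A j t * A c t - A c t * A j t)) q p :=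
      fun q p => hSch2 q p
    have h3 : ∑ p : Fin 2, ∑ q : Fin 2,
        (fderiv ℂ (fun s => A a s p q) t (Pi.single ν 1) * A c t q p
          + A a t p q * fderiv ℂ (fun s => A c s q p) t (Pi.single ν 1))
        = (∑ p : Fin 2, ∑ q : Fin 2,
            ((t ν - ext n t a)⁻¹ • (A c t * A a t - A a t * A c t)) p q * A c t q p)
          + ∑ p : Fin 2, ∑ q : Fin 2, ∑ j ∈ Finset.univ.filter (fun j => j ≠ c),
              A a t p q * ((t ν - ext n t j)⁻¹ • (A j t * A c t - A c t * A j t)) q p := by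
      rw [← Finset.sum_add_distrib]
      refine Finset.sum_congr rfl fun p _ => ?_
      rw [← Finset.sum_add_distrib]
      refine Finset.sum_congr rfl fun q _ => ?_
      rw [h1 p q, h2 q p, Finset.mul_sum]
    rw [h3]
    have h4 : (∑ p : Fin 2, ∑ q : Fin 2,
        ((t ν - ext n t a)⁻¹ • (A c t * A a t - A a t * A c t)) p q * A c t q p) = 0 := by
      rw [← trace2_expand, Matrix.smul_mul, Matrix.trace_smul, trace2_comm_fst, smul_zero]
    have h5 : ∑ p : Fin 2, ∑ q : Fin 2, ∑ j ∈ Finset.univ.filter (fun j => j ≠ c),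
        A a t p q * ((t ν - ext n t j)⁻¹ • (A j t * A c t - A c t * A j t)) q p
        = ∑ j ∈ Finset.univ.filter (fun j => j ≠ c), ∑ p : Fin 2, ∑ q : Fin 2,
            A a t p q * ((t ν - ext n t j)⁻¹ • (A j t * A c t - A c t * A j t)) q p := by
      exact (Finset.sum_congr rfl fun p _ => Finset.sum_comm).trans Finset.sum_comm
    rw [h4, h5, zero_add, ← Finset.sum_neg_distrib]
    refine Finset.sum_congr rfl fun j _ => ?_
    rw [← trace2_expand, Matrix.mul_smul, Matrix.trace_smul, smul_eq_mul, trace2_sub_swap]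
    ring
  have hHa : Ha n A = fun s => ∑ k ∈ Finset.univ.filter (fun k => k ≠ a),
      (A a s * A k s).trace / (0 - ext n s k) := by
    rcases a with ⟨av, hav⟩
    simp only at ha
    subst ha
    rfl
  have hcK : c ∈ Finset.univ.filter (fun k : Fin (n + 2) => k ≠ a) := by simp [hca]
  have hdiffq : ∀ k ∈ Finset.univ.filter (fun k : Fin (n + 2) => k ≠ a),
      DifferentiableAt ℂ (fun s => (A a s * A k s).trace / (0 - ext n s k)) t := by
    intro k hk
    have hka : k ≠ a := by simpa using hk
    refine diffAt_div (hN a k) (hD k) ?_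
    have h1 := hx0 k hka
    intro hzero
    apply h1
    linear_combination -hzero
  have expand : pderiv n ν (Ha n A) t
      = ∑ k ∈ Finset.univ.filter (fun k : Fin (n + 2) => k ≠ a),
          (fderiv ℂ (fun s => (A a s * A k s).trace) t (Pi.single ν 1) * (0 - ext n t k)
            - (A a t * A k t).trace * (if k = c then -1 else 0)) / (0 - ext n t k) ^ 2 := by
    rw [hHa]
    simp only [pderiv]
    rw [fderiv_fun_sum hdiffq, ContinuousLinearMap.sum_apply]
    refine Finset.sum_congr rfl fun k hk => ?_
    have hka : k ≠ a := by simpa using hk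
    have h0 : (0 : ℂ) - ext n t k ≠ 0 := by
      have h1 := hx0 k hka
      intro hzero
      apply h1
      linear_combination -hzero
    rw [pderiv_div' ν _ _ t (hN a k) (hD k) h0, hpD k]
  have hEterm : ∀ k ∈ (Finset.univ.filter (fun k : Fin (n + 2) => k ≠ a)).erase c,
      (fderiv ℂ (fun s => (A a s * A k s).trace) t (Pi.single ν 1) * (0 - ext n t k)
        - (A a t * A k t).trace * (if k = c then -1 else 0)) / (0 - ext n t k) ^ 2
      = -((t ν - ext n t k)⁻¹ * (A a t * (A c t * A k t - A k t * A c t)).trace) / t ν := by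
    intro k hk
    obtain ⟨hkc, hk'⟩ := Finset.mem_erase.mp hk
    have hka : k ≠ a := by simpa using hk'
    rw [hpN k hkc, if_neg hkc]
    have e1 : ((A c t * A a t - A a t * A c t) * A k t).trace
        = -(A a t * (A c t * A k t - A k t * A c t)).trace := trace2_rot (A a t) (A c t) (A k t)
    rw [e1]
    have h1 := hx0 k hka
    have h2 := hxτ k hkc
    field_simp
    ring
  have hcterm :
      (fderiv ℂ (fun s => (A a s * A c s).trace) t (Pi.single ν 1) * (0 - ext n t c)
        - (A a t * A c t).trace * (if c = c then -1 else 0)) / (0 - ext n t c) ^ 2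
      = (A a t * A c t).trace / t ν ^ 2
        + (∑ j ∈ (Finset.univ.filter (fun k : Fin (n + 2) => k ≠ a)).erase c,
            (t ν - ext n t j)⁻¹ * (A a t * (A c t * A j t - A j t * A c t)).trace) / t ν := by
    rw [hpNc, if_pos rfl, hext_c]
    have haKc : a ∈ Finset.univ.filter (fun j : Fin (n + 2) => j ≠ c) := by simp [hac]
    rw [← Finset.add_sum_erase _ _ haKc]
    have hga : (A a t * (A c t * A a t - A a t * A c t)).trace = 0 :=
      trace2_left_comm (A a t) (A c t)
    rw [hga, mul_zero, zero_add]
    have hEE : (Finset.univ.filter (fun j : Fin (n + 2) => j ≠ c)).erase a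
        = (Finset.univ.filter (fun k : Fin (n + 2) => k ≠ a)).erase c := by
      ext k
      simp only [Finset.mem_erase, Finset.mem_filter, Finset.mem_univ, true_and]
      tauto
    rw [hEE]
    field_simp
    ring
  rw [expand, ← Finset.add_sum_erase _ _ hcK, hcterm, Finset.sum_congr rfl hEterm,
    Matrix.trace_mul_comm (A c t) (A a t)]
  have hS : ∑ k ∈ (Finset.univ.filter (fun k : Fin (n + 2) => k ≠ a)).erase c,
      -((t ν - ext n t k)⁻¹ * (A a t * (A c t * A k t - A k t * A c t)).trace) / t ν
      = -(∑ k ∈ (Finset.univ.filter (fun k : Fin (n + 2) => k ≠ a)).erase c,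
          (t ν - ext n t k)⁻¹ * (A a t * (A c t * A k t - A k t * A c t)).trace) / t ν := by
    rw [← Finset.sum_div, ← Finset.sum_neg_distrib]
  rw [hS]
  ring

/-- `∂/∂t_n ( Σ_{i=1}^n (t_i − 1) H̃_i ) = tr(A_n A_{n+1}) / t_n²`
(recall `t_{n+1} = 0`). -/
theorem pderiv_last_weighted_Htil
    (n : ℕ) (hn : 2 ≤ n) (θ : Fin (n + 3) → ℂ)
    (U : Set (Fin n → ℂ)) (hU : IsOpen U)
    (A : Fin (n + 2) → (Fin n → ℂ) → Matrix (Fin 2) (Fin 2) ℂ)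
    (hdist : ∀ t ∈ U, ∀ j k : Fin (n + 2), j ≠ k → ext n t j ≠ ext n t k)
    (hHol : ∀ (j : Fin (n + 2)) (k l : Fin 2),
      DifferentiableOn ℂ (fun s => A j s k l) U)
    (hdet : ∀ t ∈ U, ∀ j, (A j t).det = 0)
    (htr : ∀ t ∈ U, ∀ j : Fin (n + 2), (A j t).trace = θ (Fin.castSucc j))
    (hsum : ∀ t ∈ U, ∑ j, A j t =
      -Matrix.diagonal ![rho n θ, rho n θ + θ (Fin.last (n + 2))])
    (hSch1 : ∀ t ∈ U, ∀ (i : Fin n) (j : Fin (n + 2)), j ≠ inc n i →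
      ∀ (k l : Fin 2),
        pderiv n i (fun s => A j s k l) t
          = ((t i - ext n t j)⁻¹ •
              (A (inc n i) t * A j t - A j t * A (inc n i) t)) k l)
    (hSch2 : ∀ t ∈ U, ∀ (i : Fin n) (k l : Fin 2),
      pderiv n i (fun s => A (inc n i) s k l) t
        = ∑ j ∈ Finset.univ.filter (fun j => j ≠ inc n i),
            ((t i - ext n t j)⁻¹ •
              (A j t * A (inc n i) t - A (inc n i) t * A j t)) k l)
    :
    ∀ t ∈ U,
      pderiv n ⟨n - 1, by omega⟩ (fun s => ∑ i, (s i - 1) * Htil n A i s) t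
        = (A (inc n ⟨n - 1, by omega⟩) t * A ⟨n, by omega⟩ t).trace
            / (t ⟨n - 1, by omega⟩) ^ 2 := by
  
  intro t ht
  refine Eq.trans ?_ (piece2 n U hU A t ht ⟨n - 1, by omega⟩ ⟨n, by omega⟩ rfl hHol
    (hdist t ht) (fun j hj k l => hSch1 t ht _ j hj k l) (fun k l => hSch2 t ht _ k l))
  have heq : (fun s : Fin n → ℂ => ∑ i, (s i - 1) * Htil n A i s)
      =ᶠ[nhds t] fun s => Ha n A s + Cconst n θ := by
    filter_upwards [hU.mem_nhds ht] with s hs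
    exact piece1 n θ A s (hdist s hs) (hdet s hs) (htr s hs) (hsum s hs)
  simp only [pderiv]
  rw [heq.fderiv_eq, fderiv_add_const]
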